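/- For all integers n ≥ 3, k ≥ 1, and t ≥ r ≥ 1, every (t,r)-broadcasting set of the k-th power of the cycle on n vertices has size at least ⌈n / ((2t−r−1)k + 1)⌉; that is, γ_{t,r}(C_n^{(k)}) ≥ ⌈n / ((2t−r−1)k + 1)⌉. -/

import Mathlib

/-- Graph distance in the k-th power of the cycle on `n` vertices:
`d(v_i, v_j) = ⌈min(|i - j|, n - |i - j|) / k⌉`. -/
def cyclePowDist (n k : ℕ) (i j : Fin n) : ℕ :=
  (min (max (i : ℕ) (j : ℕ) - min (i : ℕ) (j : ℕ))
      (n - (max (i : ℕ) (j : ℕ) - min (i : ℕ) (j : ℕ))) + k - 1) / k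

/-- A finite set of towers `T` in `C_n^{(k)}` is `(t,r)`-broadcasting if every vertex `v`
receives total signal `∑_{w ∈ T} max (t - d(w,v)) 0 ≥ r`. -/
def IsCycleBroadcasting (n k t r : ℕ) (T : Finset (Fin n)) : Prop :=
  ∀ v : Fin n, r ≤ ∑ w ∈ T, (t - cyclePowDist n k w v)

/-- `γ_{t,r}(C_n^{(k)})`: the minimum cardinality of a `(t,r)`-broadcasting set of `C_n^{(k)}`. -/
noncomputable def gammaCyclePow (n k t r : ℕ) : ℕ :=
  sInf {m : ℕ | ∃ T : Finset (Fin n), IsCycleBroadcasting n k t r T ∧ T.card = m}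


def zdist (n k : ℕ) (x y : ZMod n) : ℕ := (min (x - y).val (y - x).val + k - 1) / k

def ZB (n k t r : ℕ) (S : Finset (ZMod n)) : Prop :=
  ∀ v : ZMod n, r ≤ ∑ w ∈ S, (t - zdist n k w v)

noncomputable def gapZ (n : ℕ) (S : Finset (ZMod n)) (c : ZMod n) : ℕ :=
  sInf {j : ℕ | 0 < j ∧ c + (j : ZMod n) ∈ S}

section gaps
variable {n : ℕ} [NeZero n] {S : Finset (ZMod n)} {c : ZMod n}

lemma gapZ_set_nonempty (hc : c ∈ S) : {j : ℕ | 0 < j ∧ c + (j : ZMod n) ∈ S}.Nonempty :=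
  ⟨n, Nat.pos_of_ne_zero (NeZero.ne n), by simp [ZMod.natCast_self, hc]⟩

lemma gapZ_pos (hc : c ∈ S) : 0 < gapZ n S c := (Nat.sInf_mem (gapZ_set_nonempty hc)).1

lemma gapZ_mem (hc : c ∈ S) : c + ((gapZ n S c : ℕ) : ZMod n) ∈ S :=
  (Nat.sInf_mem (gapZ_set_nonempty hc)).2

lemma gapZ_le (hc : c ∈ S) : gapZ n S c ≤ n :=
  Nat.sInf_le ⟨Nat.pos_of_ne_zero (NeZero.ne n), by simp [ZMod.natCast_self, hc]⟩

lemma gapZ_min (hc : c ∈ S) {j : ℕ} (hj : 0 < j) (hlt : j < gapZ n S c) :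
    c + (j : ZMod n) ∉ S := fun hmem => Nat.notMem_of_lt_sInf hlt ⟨hj, hmem⟩

lemma gapZ_eq (hc : c ∈ S) {g : ℕ} (hg : 0 < g) (hmem : c + (g : ZMod n) ∈ S)
    (hmin : ∀ j : ℕ, 0 < j → j < g → c + (j : ZMod n) ∉ S) : gapZ n S c = g := by
  refine le_antisymm (Nat.sInf_le ⟨hg, hmem⟩) ?_
  by_contra h
  push_neg at h
  exact hmin _ (gapZ_pos hc) h (gapZ_mem hc)

end gaps

lemma core {n k t r : ℕ} [NeZero n] (hk : 1 ≤ k) (hr : 1 ≤ r) (htr : r ≤ t)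
    {S : Finset (ZMod n)} (hZB : ZB n k t r S) {c : ZMod n} (hc : c ∈ S)
    {p : ℕ} (hp0 : 0 < p)
    (hpmin : ∀ j : ℕ, 0 < j → j < p → c - (j : ZMod n) ∉ S)
    (hle : p ≤ gapZ n S c)
    (hsum : 2 * ((2 * t - r - 1) * k) + 3 ≤ p + gapZ n S c) : False := by
  set q := gapZ n S c with hqdef
  have hqn : q ≤ n := gapZ_le hc
  have hq0 : 0 < q := gapZ_pos hc
  -- linear relations between the products appearing below
  have hvu : r * k ≤ t * k := Nat.mul_le_mul_right k htr
  have hM : (t - 1) * k + k = t * k := by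
    have h1 : t - 1 + 1 = t := by omega
    calc (t - 1) * k + k = (t - 1 + 1) * k := by ring
    _ = t * k := by rw [h1]
  have hR : (r - 1) * k + k = r * k := by
    have h1 : r - 1 + 1 = r := by omega
    calc (r - 1) * k + k = (r - 1 + 1) * k := by ring
    _ = r * k := by rw [h1]
  have hLk : (2 * t - r - 1) * k + (r * k + k) = 2 * (t * k) := by
    have h1 : 2 * t - r - 1 + (r + 1) = 2 * t := by omega
    calc (2 * t - r - 1) * k + (r * k + k) = (2 * t - r - 1 + (r + 1)) * k := by ring
    _ = 2 * (t * k) := by rw [h1]; ring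
  have htrk : (t - r + 1) * k + r * k = t * k + k := by
    have h1 : t - r + 1 + r = t + 1 := by omega
    calc (t - r + 1) * k + r * k = (t - r + 1 + r) * k := by ring
    _ = t * k + k := by rw [h1]; ring
  set p' := min p ((r - 1) * k) with hp'def
  have hp'1 : p' ≤ p := min_le_left _ _
  have hp'2 : p' ≤ (r - 1) * k := min_le_right _ _
  have hp'3 : p' = p ∨ p' = (r - 1) * k := min_choice _ _
  set α := (t - 1) * k + 1 - p' with hα
  have hα1 : 1 ≤ α := by omega
  have hαn : α < n := by omega
  set x := c + (α : ZMod n) with hx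
  have hxc : (x - c).val = α := by
    rw [hx, add_sub_cancel_left]
    exact ZMod.val_cast_of_lt hαn
  have hxc0 : x - c ≠ 0 := by
    intro h0
    rw [h0, ZMod.val_zero] at hxc
    omega
  have hcx : (c - x).val = n - α := by
    have h1 : c - x = -(x - c) := by ring
    rw [h1, ZMod.neg_val, if_neg hxc0, hxc]
  have hzc : t - r + 1 ≤ zdist n k c x := by
    rw [show zdist n k c x = (min (c - x).val (x - c).val + k - 1) / k from rfl, hcx, hxc,
      Nat.le_div_iff_mul_le (show 0 < k by omega)]
    rcases le_total (n - α) α with hmm | hmm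
    · rw [min_eq_left hmm]; omega
    · rw [min_eq_right hmm]; omega
  have hothers : ∀ w ∈ S, w ≠ c → t - zdist n k w x = 0 := by
    intro w hw hwc
    set o := (w - c).val with ho
    have hw_eq : c + (o : ZMod n) = w := by
      rw [ho, ZMod.natCast_rightInverse (w - c)]; ring
    have ho0 : 0 < o := by
      rcases Nat.eq_zero_or_pos o with h | h
      · exfalso
        apply hwc
        have h2 : w - c = 0 := by
          have := ZMod.natCast_rightInverse (n := n) (w - c)
          rw [← ho, h] at this
          simpa using this.symm
        have := sub_eq_zero.mp h2
        exact this
      · exact h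
    have holt : o < n := ZMod.val_lt _
    have hoq : q ≤ o := by
      by_contra h
      push_neg at h
      exact gapZ_min hc ho0 h (by rw [hw_eq]; exact hw)
    have hop : o + p ≤ n := by
      by_contra h
      push_neg at h
      have h1 : 0 < n - o := by omega
      have h2 : n - o < p := by omega
      apply hpmin (n - o) h1 h2
      have h3 : ((n - o : ℕ) : ZMod n) = -(o : ZMod n) := by
        have h4 : ((n - o : ℕ) : ZMod n) + (o : ZMod n) = ((n : ℕ) : ZMod n) := by
          rw [← Nat.cast_add]; congr 1; omega
        rw [ZMod.natCast_self] at h4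
        linear_combination h4
      rw [h3, sub_neg_eq_add, hw_eq]
      exact hw
    have hαo : α < o := by omega
    have hwx : (w - x).val = o - α := by
      have h1 : w - x = ((o - α : ℕ) : ZMod n) := by
        have h2 : w - x = (o : ZMod n) - (α : ZMod n) := by rw [← hw_eq]; ring
        rw [h2, ← Nat.cast_sub (le_of_lt hαo)]
      rw [h1]
      exact ZMod.val_cast_of_lt (by omega)
    have hwx0 : w - x ≠ 0 := by
      intro h0
      rw [h0, ZMod.val_zero] at hwx
      omega
    have hxw : (x - w).val = n - (o - α) := by
      have h1 : x - w = -(w - x) := by ring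
      rw [h1, ZMod.neg_val, if_neg hwx0, hwx]
    have hfar : t ≤ zdist n k w x := by
      rw [show zdist n k w x = (min (w - x).val (x - w).val + k - 1) / k from rfl, hwx, hxw,
        Nat.le_div_iff_mul_le (show 0 < k by omega)]
      rcases le_total (o - α) (n - (o - α)) with hmm | hmm
      · rw [min_eq_left hmm]; omega
      · rw [min_eq_right hmm]; omega
    omega
  have hsig := hZB x
  rw [Finset.sum_eq_single_of_mem c hc (fun w hw hne => hothers w hw hne)] at hsig
  omega

lemma gapZ_sum {n : ℕ} [NeZero n] {S : Finset (ZMod n)} (hS : S.Nonempty) :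
    ∑ c ∈ S, gapZ n S c = n := by
  classical
  set I : ZMod n → Finset (ZMod n) :=
    fun c => (Finset.range (gapZ n S c)).image (fun s : ℕ => c + (s : ZMod n)) with hI
  have key : ∀ c ∈ S, ∀ c' ∈ S, ∀ s s' : ℕ, s < gapZ n S c → s' < gapZ n S c' →
      s' ≤ s → c + (s : ZMod n) = c' + (s' : ZMod n) → c = c' := by
    intro c hc c' hc' s s' hs hs' hss heq
    rcases Nat.eq_or_lt_of_le hss with h | h
    · subst h
      exact add_right_cancel heq
    · exfalso
      have hgn := gapZ_le hc
      have hc'eq : c' = c + ((s - s' : ℕ) : ZMod n) := by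
        rw [Nat.cast_sub hss]
        linear_combination -heq
      apply gapZ_min hc (show 0 < s - s' by omega) (show s - s' < gapZ n S c by omega)
      rw [← hc'eq]; exact hc'
  have hcard : ∀ c ∈ S, (I c).card = gapZ n S c := by
    intro c hc
    rw [hI]
    rw [Finset.card_image_of_injOn, Finset.card_range]
    intro s hs s' hs' hss
    simp only [Finset.coe_range, Set.mem_Iio] at hs hs'
    have hgn := gapZ_le hc
    have h1 : ((s : ℕ) : ZMod n) = ((s' : ℕ) : ZMod n) := add_left_cancel hss
    have h2 := congrArg ZMod.val h1
    rwa [ZMod.val_cast_of_lt (by omega), ZMod.val_cast_of_lt (by omega)] at h2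
  have hcover : ∀ v : ZMod n, ∃ c ∈ S, ∃ s : ℕ, s < gapZ n S c ∧ v = c + (s : ZMod n) := by
    intro v
    set B := S.image (fun w => (v - w).val) with hB
    have hBne : B.Nonempty := hS.image _
    obtain ⟨w₀, hw₀, hw₀eq⟩ := Finset.mem_image.mp (B.min'_mem hBne)
    refine ⟨w₀, hw₀, (v - w₀).val, ?_, ?_⟩
    · by_contra h
      push_neg at h
      have hg0 : 0 < gapZ n S w₀ := gapZ_pos hw₀
      have hw₁ : w₀ + ((gapZ n S w₀ : ℕ) : ZMod n) ∈ S := gapZ_mem hw₀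
      have hval : (v - (w₀ + ((gapZ n S w₀ : ℕ) : ZMod n))).val = (v - w₀).val - gapZ n S w₀ := by
        have h1 : v - (w₀ + ((gapZ n S w₀ : ℕ) : ZMod n))
            = (((v - w₀).val - gapZ n S w₀ : ℕ) : ZMod n) := by
          rw [Nat.cast_sub h, ZMod.natCast_rightInverse (v - w₀)]
          ring
        rw [h1]
        exact ZMod.val_cast_of_lt (by have := ZMod.val_lt (v - w₀); omega)
      have hmem : (v - w₀).val - gapZ n S w₀ ∈ B := by
        rw [hB]
        exact Finset.mem_image.mpr ⟨_, hw₁, hval⟩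
      have hle := B.min'_le _ hmem
      rw [← hw₀eq] at hle
      omega
    · rw [ZMod.natCast_rightInverse (v - w₀)]
      ring
  have hU : S.biUnion I = Finset.univ := by
    apply Finset.eq_univ_iff_forall.mpr
    intro v
    rw [Finset.mem_biUnion]
    obtain ⟨c, hc, s, hs, hv⟩ := hcover v
    exact ⟨c, hc, Finset.mem_image.mpr ⟨s, Finset.mem_range.mpr hs, hv.symm⟩⟩
  have hdisj : ∀ c ∈ S, ∀ c' ∈ S, c ≠ c' → Disjoint (I c) (I c') := by
    intro c hc c' hc' hne
    rw [Finset.disjoint_left]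
    intro a ha ha'
    obtain ⟨s, hs, hseq⟩ := Finset.mem_image.mp ha
    obtain ⟨s', hs', hs'eq⟩ := Finset.mem_image.mp ha'
    rw [Finset.mem_range] at hs hs'
    have heq : c + (s : ZMod n) = c' + (s' : ZMod n) := by rw [hseq, hs'eq]
    rcases le_total s' s with h | h
    · exact hne (key c hc c' hc' s s' hs hs' h heq)
    · exact hne ((key c' hc' c hc s' s hs' hs h heq.symm).symm)
  calc (∑ c ∈ S, gapZ n S c) = ∑ c ∈ S, (I c).card := (Finset.sum_congr rfl hcard).symm
  _ = (S.biUnion I).card := (Finset.card_biUnion hdisj).symm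
  _ = Finset.univ.card := by rw [hU]
  _ = Fintype.card (ZMod n) := Finset.card_univ
  _ = n := ZMod.card n

lemma gapZ_next_inj {n : ℕ} [NeZero n] {S : Finset (ZMod n)} :
    ∀ c ∈ S, ∀ c' ∈ S, c + ((gapZ n S c : ℕ) : ZMod n) = c' + ((gapZ n S c' : ℕ) : ZMod n) →
      c = c' := by
  have key : ∀ c ∈ S, ∀ c' ∈ S, gapZ n S c ≤ gapZ n S c' →
      c + ((gapZ n S c : ℕ) : ZMod n) = c' + ((gapZ n S c' : ℕ) : ZMod n) → c = c' := by
    intro c hc c' hc' hle heq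
    rcases Nat.eq_or_lt_of_le hle with h | h
    · rw [h] at heq
      exact add_right_cancel heq
    · exfalso
      have hceq : c = c' + ((gapZ n S c' - gapZ n S c : ℕ) : ZMod n) := by
        rw [Nat.cast_sub (le_of_lt h)]
        linear_combination heq
      apply gapZ_min hc' (show 0 < gapZ n S c' - gapZ n S c by omega)
        (show gapZ n S c' - gapZ n S c < gapZ n S c' by have := gapZ_pos hc; omega)
      rw [← hceq]; exact hc
  intro c hc c' hc' heq
  rcases le_total (gapZ n S c) (gapZ n S c') with h | h
  · exact key c hc c' hc' h heq
  · exact (key c' hc' c hc h heq.symm).symm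

lemma ZB_neg {n k t r : ℕ} [NeZero n] {S : Finset (ZMod n)} (h : ZB n k t r S) :
    ZB n k t r (S.image (fun z => -z)) := by
  intro v
  rw [Finset.sum_image (fun a _ b _ hab => neg_injective hab)]
  refine le_trans (h (-v)) (le_of_eq ?_)
  apply Finset.sum_congr rfl
  intro w _
  congr 1
  show zdist n k w (-v) = zdist n k (-w) v
  unfold zdist
  have e1 : w - -v = w + v := by ring
  have e2 : -v - w = -(w + v) := by ring
  have e3 : -w - v = -(w + v) := by ring
  have e4 : v - -w = w + v := by ring
  rw [e1, e2, e3, e4, min_comm]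

lemma mem_neg_image {n : ℕ} {S : Finset (ZMod n)} {z : ZMod n} :
    z ∈ S.image (fun z => -z) ↔ -z ∈ S := by
  constructor
  · intro h
    obtain ⟨a, ha, rfl⟩ := Finset.mem_image.mp h
    simpa using ha
  · intro h
    exact Finset.mem_image.mpr ⟨-z, h, neg_neg z⟩

lemma pair_bound {n k t r : ℕ} [NeZero n] (hk : 1 ≤ k) (hr : 1 ≤ r) (htr : r ≤ t)
    {S : Finset (ZMod n)} (hZB : ZB n k t r S) {b : ZMod n} (hb : b ∈ S) :
    gapZ n S b + gapZ n S (b + ((gapZ n S b : ℕ) : ZMod n)) ≤ 2 * ((2 * t - r - 1) * k) + 2 := by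
  by_contra hcon
  push_neg at hcon
  set p := gapZ n S b with hpdef
  set c := b + ((p : ℕ) : ZMod n) with hcdef
  have hc : c ∈ S := gapZ_mem hb
  set q := gapZ n S c with hqdef
  have hpmin : ∀ j : ℕ, 0 < j → j < p → c - (j : ZMod n) ∉ S := by
    intro j hj hjp
    have h1 : c - (j : ZMod n) = b + ((p - j : ℕ) : ZMod n) := by
      rw [hcdef, Nat.cast_sub (le_of_lt hjp)]
      ring
    rw [h1]
    exact gapZ_min hb (by omega) (by omega)
  rcases le_total p q with hle | hle
  · exact core hk hr htr hZB hc (gapZ_pos hb) hpmin hle (by omega)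
  · set S' := S.image (fun z => -z) with hS'
    have hZB' : ZB n k t r S' := ZB_neg hZB
    have hb' : -c ∈ S' := mem_neg_image.mpr (by simpa using hc)
    have hg1 : gapZ n S' (-c) = p := by
      apply gapZ_eq hb' (gapZ_pos hb)
      · apply mem_neg_image.mpr
        have h1 : -(-c + ((p : ℕ) : ZMod n)) = b := by rw [hcdef]; ring
        rw [h1]; exact hb
      · intro j hj hjp
        rw [mem_neg_image]
        have h1 : -(-c + (j : ZMod n)) = c - (j : ZMod n) := by ring
        rw [h1]
        exact hpmin j hj hjp
    have hpmin' : ∀ j : ℕ, 0 < j → j < q → -c - (j : ZMod n) ∉ S' := by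
      intro j hj hjq
      rw [mem_neg_image]
      have h1 : -(-c - (j : ZMod n)) = c + (j : ZMod n) := by ring
      rw [h1]
      exact gapZ_min hc hj hjq
    exact core hk hr htr hZB' hb' (gapZ_pos hc) hpmin' (by rw [hg1]; exact hle)
      (by rw [hg1]; omega)

lemma card_bound {n k t r : ℕ} [NeZero n] (hk : 1 ≤ k) (hr : 1 ≤ r) (htr : r ≤ t)
    {S : Finset (ZMod n)} (hZB : ZB n k t r S) (hS : S.Nonempty) :
    n ≤ S.card * ((2 * t - r - 1) * k + 1) := by
  classical
  set nxt : ZMod n → ZMod n := fun c => c + ((gapZ n S c : ℕ) : ZMod n) with hnxt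
  have himg : S.image nxt = S := by
    apply Finset.eq_of_subset_of_card_le
    · intro z hz
      obtain ⟨ccc, hcc, rfl⟩ := Finset.mem_image.mp hz
      exact gapZ_mem hcc
    · rw [Finset.card_image_of_injOn (fun x hx y hy hxy => gapZ_next_inj x hx y hy hxy)]
  have hsum2 : ∑ b ∈ S, gapZ n S (nxt b) = n := by
    have h1 : ∑ z ∈ S.image nxt, gapZ n S z = ∑ b ∈ S, gapZ n S (nxt b) :=
      Finset.sum_image (fun x hx y hy hxy => gapZ_next_inj x hx y hy hxy)
    rw [himg, gapZ_sum hS] at h1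
    exact h1.symm
  have h2 : ∑ b ∈ S, (gapZ n S b + gapZ n S (nxt b))
      ≤ S.card * (2 * ((2 * t - r - 1) * k) + 2) := by
    have := Finset.sum_le_card_nsmul S _ (2 * ((2 * t - r - 1) * k) + 2)
      (fun b hb => pair_bound hk hr htr hZB hb)
    simpa [smul_eq_mul] using this
  rw [Finset.sum_add_distrib, gapZ_sum hS, hsum2] at h2
  have h3 : S.card * (2 * ((2 * t - r - 1) * k) + 2)
      = 2 * (S.card * ((2 * t - r - 1) * k + 1)) := by ring
  omega


lemma zdist_eq (n k : ℕ) [NeZero n] (i j : Fin n) :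
    zdist n k ((i : ℕ) : ZMod n) ((j : ℕ) : ZMod n) = cyclePowDist n k i j := by
  have key : ∀ i j : Fin n, (j : ℕ) ≤ (i : ℕ) →
      zdist n k ((i : ℕ) : ZMod n) ((j : ℕ) : ZMod n) = cyclePowDist n k i j := by
    intro i j hji
    unfold zdist cyclePowDist
    rw [max_eq_left hji, min_eq_right hji]
    rcases Nat.eq_or_lt_of_le hji with h | h
    · have hij : (i : ℕ) = (j : ℕ) := h.symm
      rw [hij]
      simp
    · have hD0 : 0 < (i : ℕ) - (j : ℕ) := by omega
      have hDn : (i : ℕ) - (j : ℕ) < n := by have := i.isLt; omega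
      have hD : ((i : ℕ) : ZMod n) - ((j : ℕ) : ZMod n) = (((i : ℕ) - (j : ℕ) : ℕ) : ZMod n) :=
        (Nat.cast_sub hji).symm
      have h1 : (((i : ℕ) : ZMod n) - ((j : ℕ) : ZMod n)).val = (i : ℕ) - (j : ℕ) := by
        rw [hD]; exact ZMod.val_cast_of_lt hDn
      have h10 : ((i : ℕ) : ZMod n) - ((j : ℕ) : ZMod n) ≠ 0 := by
        intro h0
        rw [h0, ZMod.val_zero] at h1
        omega
      have h2 : (((j : ℕ) : ZMod n) - ((i : ℕ) : ZMod n)).val = n - ((i : ℕ) - (j : ℕ)) := by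
        have he : ((j : ℕ) : ZMod n) - ((i : ℕ) : ZMod n)
            = -(((i : ℕ) : ZMod n) - ((j : ℕ) : ZMod n)) := by ring
        rw [he, ZMod.neg_val, if_neg h10, h1]
      rw [h1, h2]
  rcases le_total (j : ℕ) (i : ℕ) with h | h
  · exact key i j h
  · have hz : zdist n k ((i : ℕ) : ZMod n) ((j : ℕ) : ZMod n)
        = zdist n k ((j : ℕ) : ZMod n) ((i : ℕ) : ZMod n) := by
      unfold zdist; rw [min_comm]
    have hc : cyclePowDist n k j i = cyclePowDist n k i j := by
      unfold cyclePowDist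
      rw [max_comm ((j : ℕ)) ((i : ℕ)), min_comm ((j : ℕ)) ((i : ℕ))]
    rw [hz, ← hc]
    exact key j i h

lemma main_bound {n k t r : ℕ} (hn : 3 ≤ n) (hk : 1 ≤ k) (hr : 1 ≤ r) (htr : r ≤ t)
    (T : Finset (Fin n)) (hT : IsCycleBroadcasting n k t r T) :
    n ≤ T.card * ((2 * t - r - 1) * k + 1) := by
  have hnz : NeZero n := ⟨by omega⟩
  classical
  set f : Fin n → ZMod n := fun i => ((i : ℕ) : ZMod n) with hf
  have hfinj : Function.Injective f := by
    intro a b hab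
    have h1 : ((a : ℕ) : ZMod n).val = ((b : ℕ) : ZMod n).val := by
      rw [show ((a : ℕ) : ZMod n) = ((b : ℕ) : ZMod n) from hab]
    rw [ZMod.val_cast_of_lt a.isLt, ZMod.val_cast_of_lt b.isLt] at h1
    exact Fin.ext h1
  set S := T.image f with hS
  have hScard : S.card = T.card := Finset.card_image_of_injective _ hfinj
  have hZB : ZB n k t r S := by
    intro v
    set v' : Fin n := ⟨v.val, ZMod.val_lt v⟩ with hv'
    have hvv : f v' = v := ZMod.natCast_rightInverse v
    calc r ≤ ∑ w ∈ T, (t - cyclePowDist n k w v') := hT v'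
    _ = ∑ w ∈ T, (t - zdist n k (f w) v) := by
        apply Finset.sum_congr rfl
        intro w _
        congr 1
        rw [← hvv]
        exact (zdist_eq n k w v').symm
    _ = ∑ z ∈ S, (t - zdist n k z v) :=
        (Finset.sum_image (g := f) (f := fun z => t - zdist n k z v)
          (fun x _ y _ hxy => hfinj hxy)).symm
  have hSne : S.Nonempty := by
    rcases Finset.eq_empty_or_nonempty T with h | h
    · exfalso
      have h2 := hT ⟨0, by omega⟩
      rw [h] at h2
      simp at h2
      omega
    · exact h.image f
  have h3 := card_bound hk hr htr hZB hSne
  rw [hScard] at h3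
  exact h3


/-- For `n ≥ 3`, `k ≥ 1` and `t ≥ r ≥ 1`, every `(t,r)`-broadcasting set of `C_n^{(k)}` has
size at least `⌈n / ((2t-r-1)k + 1)⌉`; hence `γ_{t,r}(C_n^{(k)}) ≥ ⌈n / ((2t-r-1)k + 1)⌉`. -/
theorem gammaCyclePow_lower_bound (n k t r : ℕ) (hn : 3 ≤ n) (hk : 1 ≤ k) (hr : 1 ≤ r)
    (htr : r ≤ t) :
    (∀ T : Finset (Fin n), IsCycleBroadcasting n k t r T →
      (n + (2 * t - r - 1) * k) / ((2 * t - r - 1) * k + 1) ≤ T.card) ∧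
    (n + (2 * t - r - 1) * k) / ((2 * t - r - 1) * k + 1) ≤ gammaCyclePow n k t r := by
  have part1 : ∀ T : Finset (Fin n), IsCycleBroadcasting n k t r T →
      (n + (2 * t - r - 1) * k) / ((2 * t - r - 1) * k + 1) ≤ T.card := by
    intro T hT
    have h1 := main_bound hn hk hr htr T hT
    have hm : 0 < (2 * t - r - 1) * k + 1 := by omega
    have h2 : (n + (2 * t - r - 1) * k) / ((2 * t - r - 1) * k + 1) < T.card + 1 := by
      rw [Nat.div_lt_iff_lt_mul hm]
      have h3 : (T.card + 1) * ((2 * t - r - 1) * k + 1)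
          = T.card * ((2 * t - r - 1) * k + 1) + ((2 * t - r - 1) * k + 1) := by ring
      omega
    omega
  refine ⟨part1, ?_⟩
  have huniv : IsCycleBroadcasting n k t r (Finset.univ : Finset (Fin n)) := by
    intro v
    have hd : cyclePowDist n k v v = 0 := by
      unfold cyclePowDist
      simp
      omega
    calc r ≤ t - cyclePowDist n k v v := by rw [hd]; omega
    _ ≤ ∑ w ∈ Finset.univ, (t - cyclePowDist n k w v) :=
        Finset.single_le_sum (f := fun w => t - cyclePowDist n k w v)
          (fun w _ => Nat.zero_le _) (Finset.mem_univ v)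
  have hne : {m : ℕ | ∃ T : Finset (Fin n), IsCycleBroadcasting n k t r T ∧ T.card = m}.Nonempty :=
    ⟨Finset.univ.card, Finset.univ, huniv, rfl⟩
  obtain ⟨T₀, hT₀, hcard⟩ := Nat.sInf_mem hne
  unfold gammaCyclePow
  rw [← hcard]
  exact part1 T₀ hT₀
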